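/- Let a₁, ..., aₙ be positive real numbers with n ≥ 2. Then ∑_{i<j} aᵢaⱼ/(aᵢ+aⱼ) ≤ (n / (2(a₁+⋯+aₙ))) · ∑_{i<j} aᵢaⱼ. -/

import Mathlib

open Finset

theorem stmt4 (n : ℕ) (hn : 2 ≤ n) (a : Fin n → ℝ) (ha : ∀ i, 0 < a i) :
    ∑ i, ∑ j ∈ Finset.univ.filter (fun j => i < j), a i * a j / (a i + a j) ≤
      ((n:ℝ) / (2 * ∑ i, a i)) * ∑ i, ∑ j ∈ Finset.univ.filter (fun j => i < j), a i * a j := by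
  have hpos : ∀ i j : Fin n, 0 < a i + a j := fun i j => by
    have := ha i; have := ha j; linarith
  set w : Fin n → Fin n → ℝ := fun i j => a i * a j / (a i + a j) with hw
  set S : ℝ := ∑ i, a i with hSdef
  have hS : 0 < S := Finset.sum_pos (fun i _ => ha i) ⟨⟨0, by omega⟩, Finset.mem_univ _⟩
  have hwsymm : ∀ i j, w i j = w j i := fun i j => by
    simp only [hw]; rw [mul_comm, add_comm]
  -- symmetric half lemma
  have half : ∀ F : Fin n → Fin n → ℝ, (∀ i j, F i j = F j i) →
      ∑ i, ∑ j ∈ Finset.univ.filter (fun j => i < j), F i j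
        = (1/2) * ∑ i, ∑ j ∈ Finset.univ.filter (fun j => j ≠ i), F i j := by
    intro F hF
    have swap : ∑ i, ∑ j ∈ Finset.univ.filter (fun j => j < i), F i j
        = ∑ i, ∑ j ∈ Finset.univ.filter (fun j => i < j), F i j := by
      simp only [Finset.sum_filter]
      rw [Finset.sum_comm]
      exact Finset.sum_congr rfl fun i _ => Finset.sum_congr rfl fun j _ => by
        rw [hF j i]
    have key : ∑ i, ∑ j ∈ Finset.univ.filter (fun j => j ≠ i), F i j
        = ∑ i, ∑ j ∈ Finset.univ.filter (fun j => i < j), F i j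
          + ∑ i, ∑ j ∈ Finset.univ.filter (fun j => j < i), F i j := by
      rw [← Finset.sum_add_distrib]
      refine Finset.sum_congr rfl fun i _ => ?_
      rw [← Finset.sum_union]
      · congr 1
        ext j
        simp only [Finset.mem_filter, Finset.mem_union, Finset.mem_univ, true_and]
        constructor
        · intro h; rcases lt_or_gt_of_ne h.symm with h' | h'
          · exact Or.inl h'
          · exact Or.inr h'
        · rintro (h | h) <;> [exact h.ne'; exact h.ne]
      · rw [Finset.disjoint_filter]
        intro j _ h1 h2
        exact absurd h1 (not_lt.2 h2.le)
    rw [key, swap]; ring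
  have swapne : ∀ G : Fin n → Fin n → ℝ,
      ∑ i, ∑ j ∈ Finset.univ.filter (fun j => j ≠ i), G i j
        = ∑ i, ∑ j ∈ Finset.univ.filter (fun j => j ≠ i), G j i := by
    intro G
    simp only [Finset.sum_filter]
    rw [Finset.sum_comm]
    exact Finset.sum_congr rfl fun i _ => Finset.sum_congr rfl fun j _ =>
      if_congr ne_comm rfl rfl
  set P : Fin n → ℝ := fun i => ∑ j ∈ Finset.univ.filter (fun j => j ≠ i), w i j with hP
  -- identity: sum of a_i a_j off diagonal = 2 * ∑ a i * P i
  have hid : ∑ i, ∑ j ∈ Finset.univ.filter (fun j => j ≠ i), a i * a j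
      = 2 * ∑ i, a i * P i := by
    have e1 : ∀ i j : Fin n, a i * a j = a i * w i j + a j * w i j := by
      intro i j
      have h := (hpos i j).ne'
      simp only [hw]
      field_simp
    have e2 : ∑ i, ∑ j ∈ Finset.univ.filter (fun j => j ≠ i), a j * w i j
        = ∑ i, a i * P i := by
      rw [swapne (fun i j => a j * w i j)]
      simp only [hP]
      refine Finset.sum_congr rfl fun i _ => ?_
      rw [Finset.mul_sum]
      exact Finset.sum_congr rfl fun j _ => by rw [hwsymm i j]
    calc ∑ i, ∑ j ∈ Finset.univ.filter (fun j => j ≠ i), a i * a j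
        = ∑ i, ∑ j ∈ Finset.univ.filter (fun j => j ≠ i), (a i * w i j + a j * w i j) := by
          refine Finset.sum_congr rfl fun i _ => Finset.sum_congr rfl fun j _ => e1 i j
      _ = ∑ i, ∑ j ∈ Finset.univ.filter (fun j => j ≠ i), a i * w i j
          + ∑ i, ∑ j ∈ Finset.univ.filter (fun j => j ≠ i), a j * w i j := by
          rw [← Finset.sum_add_distrib]
          exact Finset.sum_congr rfl fun i _ => Finset.sum_add_distrib
      _ = ∑ i, a i * P i + ∑ i, a i * P i := by
          rw [e2]
          congr 1
          simp only [hP]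
          exact Finset.sum_congr rfl fun i _ => (Finset.mul_sum _ _ _).symm
      _ = 2 * ∑ i, a i * P i := by ring
  -- Monovarying
  have hmono : Monovary P a := by
    intro i j hij
    have hne : i ≠ j := fun h => absurd hij (by rw [h]; exact lt_irrefl _)
    have hle : a i ≤ a j := hij.le
    have wmono : ∀ k, w i k ≤ w j k := by
      intro k
      simp only [hw]
      rw [div_le_div_iff₀ (hpos i k) (hpos j k)]
      nlinarith [mul_nonneg (mul_nonneg (ha k).le (ha k).le) (sub_nonneg.2 hle)]
    have hjmem : j ∈ Finset.univ.filter (fun k => k ≠ i) := by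
      simp [hne.symm]
    have himem : i ∈ Finset.univ.filter (fun k => k ≠ j) := by
      simp [hne]
    have hset : (Finset.univ.filter (fun k => k ≠ i)).erase j
        = (Finset.univ.filter (fun k => k ≠ j)).erase i := by
      ext k
      simp only [Finset.mem_erase, Finset.mem_filter, Finset.mem_univ, true_and]
      tauto
    have hPi : P i = w i j + ∑ k ∈ (Finset.univ.filter (fun k => k ≠ i)).erase j, w i k := by
      simp only [hP]
      exact (Finset.add_sum_erase _ _ hjmem).symm
    have hPj : P j = w j i + ∑ k ∈ (Finset.univ.filter (fun k => k ≠ j)).erase i, w j k := by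
      simp only [hP]
      exact (Finset.add_sum_erase _ _ himem).symm
    rw [hPi, hPj, hwsymm i j, ← hset]
    exact add_le_add le_rfl (Finset.sum_le_sum fun k _ => wmono k)
  have cheb := hmono.sum_mul_sum_le_card_mul_sum
  rw [Fintype.card_fin] at cheb
  have hch : (∑ i, P i) * S ≤ (n : ℝ) * ∑ i, a i * P i := by
    calc (∑ i, P i) * S = (∑ i, P i) * ∑ i, a i := by rw [hSdef]
      _ ≤ (n : ℝ) * ∑ i, P i * a i := cheb
      _ = (n : ℝ) * ∑ i, a i * P i := by
          congr 1; exact Finset.sum_congr rfl fun i _ => mul_comm _ _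
  rw [half w hwsymm, half (fun i j => a i * a j) (fun i j => mul_comm _ _), hid]
  have h2S : (0:ℝ) < 2 * S := by linarith
  have hrhs : (n:ℝ) / (2 * S) * (1/2 * (2 * ∑ i, a i * P i))
      = ((n:ℝ) * ∑ i, a i * P i) / (2 * S) := by ring
  rw [hrhs, le_div_iff₀ h2S]
  calc 1/2 * (∑ i, P i) * (2 * S) = (∑ i, P i) * S := by ring
    _ ≤ (n : ℝ) * ∑ i, a i * P i := hch
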